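/- Let n ≥ 2 and let T ∈ M_n(k') be an invertible diagonal matrix (hence hermitian with diagonal entries in k). Then: (a) g(x, (1,0)ᵗ) = f_{T,n}(x) for every x ∈ 𝔛_T; (b) if g̃ ∈ U(H_n) has, with respect to the block decomposition with row/column sizes (n−1, 1, n−1, 1), the form g̃ = [[p, *, *, *],[0, a, λ, b],[0, 0, p^{*−1}, 0],[0, c, μ, d]], where p ∈ GL_{n−1}(k'), λ, μ ∈ M_{1,n−1}(k'), the entries * are arbitrary, and h := [[a,b],[c,d]] satisfies h*·[[0,1],[1,0]]·h = [[0,1],[1,0]], then for every x ∈ 𝔛_T, v ∈ M_{2,1}(k'), and r ∈ k'^×: g(g̃·x, h·v·r^{−1}) = N(det p)^{−1} · N(r)^{−1} · g(x, v). -/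

import Mathlib

open Matrix MeasureTheory
open scoped BigOperators
noncomputable section
open Classical

/-- Conjugate transpose of a matrix with respect to an involution `conj` of the field. -/
def ctr {k' : Type} [Field k'] (conj : k' ≃+* k') {m l : Type} (A : Matrix m l k') :
    Matrix l m k' := fun i j => conj (A j i)

/-- The split hermitian form `H_n = [[0,1_n],[1_n,0]]`. -/
def Hmat (k' : Type) [Field k'] (n : ℕ) : Matrix (Fin n ⊕ Fin n) (Fin n ⊕ Fin n) k' :=
  Matrix.fromBlocks 0 1 1 0

/-- The hermitian form `H_1 = [[0,1],[1,0]]`. -/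
def H1 (k' : Type) [Field k'] : Matrix (Fin 2) (Fin 2) k' := !![0, 1; 1, 0]

/-- The lower `n × n` block of a `2n × n` matrix. -/
def lowerBlock {k' : Type} [Field k'] {n : ℕ} (x : Matrix (Fin n ⊕ Fin n) (Fin n) k') :
    Matrix (Fin n) (Fin n) k' := fun i j => x (Sum.inr i) j

/-- `d_i(y)` : determinant of the upper left `i × i` block of `y`. -/
def dmin {k' : Type} [Field k'] {n : ℕ} (i : ℕ) (hi : i ≤ n)
    (y : Matrix (Fin n) (Fin n) k') : k' :=
  (y.submatrix (Fin.castLE hi) (Fin.castLE hi)).det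

/-- The relative invariant `f_{T,i}(x) = d_i(x₂ T⁻¹ x₂*)`. -/
def fTi {k' : Type} [Field k'] (conj : k' ≃+* k') {n : ℕ}
    (T : Matrix (Fin n) (Fin n) k') (x : Matrix (Fin n ⊕ Fin n) (Fin n) k')
    (i : ℕ) (hi : i ≤ n) : k' :=
  dmin i hi (lowerBlock x * T⁻¹ * ctr conj (lowerBlock x))

/-- The matrix `M(x,v)` : first `n−1` rows those of `x₂`, last row
`v_1·(last row of x₂) − v_2·(last row of the upper block of x)`. -/
def Mxv {k' : Type} [Field k'] {n : ℕ} (x : Matrix (Fin n ⊕ Fin n) (Fin n) k')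
    (v : Fin 2 → k') : Matrix (Fin n) (Fin n) k' :=
  fun i j =>
    if (i : ℕ) = n - 1 then v 0 * x (Sum.inr i) j - v 1 * x (Sum.inl i) j
    else x (Sum.inr i) j

/-- `g(x,v) = det(M(x,v) T⁻¹ M(x,v)*)`. -/
def gxv {k' : Type} [Field k'] (conj : k' ≃+* k') {n : ℕ}
    (T : Matrix (Fin n) (Fin n) k') (x : Matrix (Fin n ⊕ Fin n) (Fin n) k')
    (v : Fin 2 → k') : k' :=
  (Mxv x v * T⁻¹ * ctr conj (Mxv x v)).det
section Aux
variable {k' : Type} [Field k'] (conj : k' ≃+* k')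

lemma ctr_mul {m l o : Type} [Fintype l] (A : Matrix m l k') (B : Matrix l o k') :
    ctr conj (A * B) = ctr conj B * ctr conj A := by
  ext i j
  simp only [ctr, Matrix.mul_apply, map_sum, _root_.map_mul]
  exact Finset.sum_congr rfl fun x _ => mul_comm _ _

lemma det_ctr {m : Type} [Fintype m] [DecidableEq m] (A : Matrix m m k') :
    (ctr conj A).det = conj A.det := by
  have h : ctr conj A = (A.map (conj : k' →+* k'))ᵀ := rfl
  rw [h, Matrix.det_transpose]
  exact (RingHom.map_det (conj : k' →+* k') A).symm

def eqv (n : ℕ) (hn : 1 ≤ n) : Fin (n-1) ⊕ Fin 1 ≃ Fin n :=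
  finSumFinEquiv.trans (finCongr (by omega))

lemma eqv_inl (n : ℕ) (hn : 1 ≤ n) (i : Fin (n-1)) :
    eqv n hn (Sum.inl i) = Fin.castLE (Nat.sub_le n 1) i := by
  ext; simp [eqv]

lemma eqv_inr (n : ℕ) (hn : 1 ≤ n) (i : Fin 1) :
    eqv n hn (Sum.inr i) = ⟨n-1, by omega⟩ := by
  obtain rfl : i = 0 := Subsingleton.elim _ _
  ext; simp [eqv]

lemma sum_split {M : Type} [AddCommMonoid M] {n : ℕ} (hn : 1 ≤ n) (f : Fin n → M) :
    ∑ j, f j = (∑ j : Fin (n-1), f (Fin.castLE (Nat.sub_le n 1) j)) + f ⟨n-1, by omega⟩ := by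
  rw [← Equiv.sum_comp (eqv n hn) f, Fintype.sum_sum_type, Fin.sum_univ_one, eqv_inr]
  congr 1

lemma det_lastcol {n : ℕ} (hn : 1 ≤ n) (Q : Matrix (Fin n) (Fin n) k')
    (hQ : ∀ i : Fin n, (i : ℕ) ≠ n - 1 → Q i ⟨n-1, by omega⟩ = 0) :
    Q.det = (Q.submatrix (Fin.castLE (Nat.sub_le n 1)) (Fin.castLE (Nat.sub_le n 1))).det
      * Q ⟨n-1, by omega⟩ ⟨n-1, by omega⟩ := by
  rw [← Matrix.det_submatrix_equiv_self (eqv n hn) Q]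
  have h : Q.submatrix (eqv n hn) (eqv n hn) = Matrix.fromBlocks
      (Q.submatrix (Fin.castLE (Nat.sub_le n 1)) (Fin.castLE (Nat.sub_le n 1)))
      0
      (Matrix.of fun _ j => Q ⟨n-1, by omega⟩ (Fin.castLE (Nat.sub_le n 1) j))
      (Matrix.of fun _ _ => Q ⟨n-1, by omega⟩ ⟨n-1, by omega⟩) := by
    ext i j
    cases i with
    | inl i =>
      cases j with
      | inl j => simp [eqv_inl]
      | inr j =>
        rw [Matrix.submatrix_apply, eqv_inl, eqv_inr]
        rw [Matrix.fromBlocks_apply₁₂]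
        rw [hQ _ (by have := i.isLt; simp [Fin.castLE]; omega)]
        rfl
    | inr i =>
      cases j with
      | inl j => rw [Matrix.submatrix_apply, eqv_inl, eqv_inr]; rfl
      | inr j => rw [Matrix.submatrix_apply, eqv_inr, eqv_inr]; rfl
  rw [h, Matrix.det_fromBlocks_zero₁₂, Matrix.det_fin_one, Matrix.of_apply]

end Aux

section QmatSec
variable {k' : Type} [Field k'] (conj : k' ≃+* k')

/-- Auxiliary transition matrix. -/
def Qmat {n : ℕ} (p : Matrix (Fin (n-1)) (Fin (n-1)) k') (lamv muv : Fin (n-1) → k')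
    (a b c d : k') (vv : Fin 2 → k') (r : k') : Matrix (Fin n) (Fin n) k' :=
  fun i j =>
    if hi : (i : ℕ) = n - 1 then
      (if hj : (j : ℕ) = n - 1 then r⁻¹ * (a * d - b * c)
       else r⁻¹ * ((a * vv 0 + b * vv 1) * muv ⟨j, by have := j.isLt; omega⟩
          - (c * vv 0 + d * vv 1) * lamv ⟨j, by have := j.isLt; omega⟩))
    else
      (if hj : (j : ℕ) = n - 1 then 0
       else (ctr conj p)⁻¹ ⟨i, by have := i.isLt; omega⟩ ⟨j, by have := j.isLt; omega⟩)

variable {n : ℕ} (p : Matrix (Fin (n-1)) (Fin (n-1)) k') (lamv muv : Fin (n-1) → k')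
  (a b c d : k') (vv : Fin 2 → k') (r : k') (hn : 1 ≤ n)

lemma Qmat_tl (i0 j0 : Fin (n-1)) :
    Qmat conj p lamv muv a b c d vv r (Fin.castLE (Nat.sub_le n 1) i0)
      (Fin.castLE (Nat.sub_le n 1) j0) = (ctr conj p)⁻¹ i0 j0 := by
  have hi : ¬ ((Fin.castLE (Nat.sub_le n 1) i0 : Fin n) : ℕ) = n - 1 := by
    have := i0.isLt; simp only [Fin.coe_castLE]; omega
  have hj : ¬ ((Fin.castLE (Nat.sub_le n 1) j0 : Fin n) : ℕ) = n - 1 := by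
    have := j0.isLt; simp only [Fin.coe_castLE]; omega
  unfold Qmat
  rw [dif_neg hi, dif_neg hj]
  rfl

lemma Qmat_tr (i0 : Fin (n-1)) :
    Qmat conj p lamv muv a b c d vv r (Fin.castLE (Nat.sub_le n 1) i0)
      ⟨n-1, by omega⟩ = 0 := by
  have hi : ¬ ((Fin.castLE (Nat.sub_le n 1) i0 : Fin n) : ℕ) = n - 1 := by
    have := i0.isLt; simp only [Fin.coe_castLE]; omega
  unfold Qmat
  rw [dif_neg hi, dif_pos rfl]

lemma Qmat_bl (j0 : Fin (n-1)) :
    Qmat conj p lamv muv a b c d vv r ⟨n-1, by omega⟩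
      (Fin.castLE (Nat.sub_le n 1) j0) =
      r⁻¹ * ((a * vv 0 + b * vv 1) * muv j0 - (c * vv 0 + d * vv 1) * lamv j0) := by
  have hj : ¬ ((Fin.castLE (Nat.sub_le n 1) j0 : Fin n) : ℕ) = n - 1 := by
    have := j0.isLt; simp only [Fin.coe_castLE]; omega
  unfold Qmat
  rw [dif_pos rfl, dif_neg hj]
  rfl

lemma Qmat_br :
    Qmat conj p lamv muv a b c d vv r (⟨n-1, by omega⟩ : Fin n) ⟨n-1, by omega⟩ =
      r⁻¹ * (a * d - b * c) := by
  unfold Qmat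
  rw [dif_pos rfl, dif_pos rfl]

lemma Qmat_col (i : Fin n) (hi : (i : ℕ) ≠ n - 1) :
    Qmat conj p lamv muv a b c d vv r i ⟨n-1, by omega⟩ = 0 := by
  unfold Qmat
  rw [dif_neg hi, dif_pos rfl]

end QmatSec

section MxvSec
variable {k' : Type} [Field k'] {n : ℕ}

lemma Mxv_last (x : Matrix (Fin n ⊕ Fin n) (Fin n) k') (v : Fin 2 → k')
    (i : Fin n) (hi : (i : ℕ) = n - 1) (j : Fin n) :
    Mxv x v i j = v 0 * x (Sum.inr i) j - v 1 * x (Sum.inl i) j := if_pos hi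

lemma Mxv_ne (x : Matrix (Fin n ⊕ Fin n) (Fin n) k') (v : Fin 2 → k')
    (i : Fin n) (hi : (i : ℕ) ≠ n - 1) (j : Fin n) :
    Mxv x v i j = x (Sum.inr i) j := if_neg hi

end MxvSec

/-- `g(x,(1,0)ᵗ) = f_«T,n»(x)`, and `g` is a relative invariant for the
parabolic subgroup `P_τ` and the extra `GL_1`-action. -/
theorem stmt7
    {k' : Type} [Field k'] [CharZero k']
    (conj : k' ≃+* k') (hinvol : ∀ a, conj (conj a) = a) (hconj_ne : ∃ a, conj a ≠ a)
    (n : ℕ) (hn : 2 ≤ n)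
    (t : Fin n → k') (ht0 : ∀ i, t i ≠ 0) (htk : ∀ i, conj (t i) = t i)
    (T : Matrix (Fin n) (Fin n) k') (hT : T = Matrix.diagonal t)
    (p : Matrix (Fin (n - 1)) (Fin (n - 1)) k')
    (lamv muv : Fin (n - 1) → k') (a b c d : k')
    (gt : Matrix (Fin n ⊕ Fin n) (Fin n ⊕ Fin n) k')
    (hgU : ctr conj gt * Hmat k' n * gt = Hmat k' n) (hgdet : IsUnit gt.det)
    (hg1 : ∀ i j : Fin (n - 1),
      gt (Sum.inl (Fin.castLE (Nat.sub_le n 1) i)) (Sum.inl (Fin.castLE (Nat.sub_le n 1) j)) = p i j)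
    (hg2 : ∀ j : Fin (n - 1),
      gt (Sum.inl ⟨n - 1, by omega⟩) (Sum.inl (Fin.castLE (Nat.sub_le n 1) j)) = 0)
    (hg3 : gt (Sum.inl ⟨n - 1, by omega⟩) (Sum.inl ⟨n - 1, by omega⟩) = a)
    (hg4 : ∀ j : Fin (n - 1),
      gt (Sum.inl ⟨n - 1, by omega⟩) (Sum.inr (Fin.castLE (Nat.sub_le n 1) j)) = lamv j)
    (hg5 : gt (Sum.inl ⟨n - 1, by omega⟩) (Sum.inr ⟨n - 1, by omega⟩) = b)
    (hg6 : ∀ (i : Fin (n - 1)) (j : Fin n),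
      gt (Sum.inr (Fin.castLE (Nat.sub_le n 1) i)) (Sum.inl j) = 0)
    (hg7 : ∀ i j : Fin (n - 1),
      gt (Sum.inr (Fin.castLE (Nat.sub_le n 1) i)) (Sum.inr (Fin.castLE (Nat.sub_le n 1) j)) =
        (ctr conj p)⁻¹ i j)
    (hg8 : ∀ i : Fin (n - 1),
      gt (Sum.inr (Fin.castLE (Nat.sub_le n 1) i)) (Sum.inr ⟨n - 1, by omega⟩) = 0)
    (hg9 : ∀ j : Fin (n - 1),
      gt (Sum.inr ⟨n - 1, by omega⟩) (Sum.inl (Fin.castLE (Nat.sub_le n 1) j)) = 0)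
    (hg10 : gt (Sum.inr ⟨n - 1, by omega⟩) (Sum.inl ⟨n - 1, by omega⟩) = c)
    (hg11 : ∀ j : Fin (n - 1),
      gt (Sum.inr ⟨n - 1, by omega⟩) (Sum.inr (Fin.castLE (Nat.sub_le n 1) j)) = muv j)
    (hg12 : gt (Sum.inr ⟨n - 1, by omega⟩) (Sum.inr ⟨n - 1, by omega⟩) = d)
    (hh : ctr conj !![a, b; c, d] * H1 k' * !![a, b; c, d] = H1 k') :
    (∀ x : Matrix (Fin n ⊕ Fin n) (Fin n) k', ctr conj x * Hmat k' n * x = T →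
      gxv conj T x ![1, 0] = fTi conj T x n le_rfl) ∧
    (∀ (x : Matrix (Fin n ⊕ Fin n) (Fin n) k'), ctr conj x * Hmat k' n * x = T →
      ∀ (vv : Fin 2 → k') (r : k'), r ≠ 0 →
        gxv conj T (gt * x) (fun i => (!![a, b; c, d]).mulVec vv i * r⁻¹) =
          (p.det * conj p.det)⁻¹ * (r * conj r)⁻¹ * gxv conj T x vv) := by
  have hn1 : 1 ≤ n := by omega
  constructor
  · -- part (a)
    intro x _
    have hM : Mxv x ![1, 0] = lowerBlock x := by
      ext i j
      unfold Mxv lowerBlock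
      split
      · simp
      · rfl
    unfold gxv fTi dmin
    rw [hM]
    congr 1
  · -- part (b)
    intro x _ vv r hr
    set w : Fin 2 → k' := fun i => (!![a, b; c, d]).mulVec vv i * r⁻¹ with hw
    have hw0 : w 0 = (a * vv 0 + b * vv 1) * r⁻¹ := by
      simp [hw, Matrix.mulVec, dotProduct, Fin.sum_univ_two]
    have hw1 : w 1 = (c * vv 0 + d * vv 1) * r⁻¹ := by
      simp [hw, Matrix.mulVec, dotProduct, Fin.sum_univ_two]
    set Q : Matrix (Fin n) (Fin n) k' := Qmat conj p lamv muv a b c d vv r with hQ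
    -- rows of gt * x
    have hrowA : ∀ (i0 : Fin (n-1)) (j : Fin n),
        (gt * x) (Sum.inr (Fin.castLE (Nat.sub_le n 1) i0)) j
          = ∑ j0 : Fin (n-1), (ctr conj p)⁻¹ i0 j0 *
              x (Sum.inr (Fin.castLE (Nat.sub_le n 1) j0)) j := by
      intro i0 j
      rw [Matrix.mul_apply, Fintype.sum_sum_type]
      rw [sum_split hn1 (f := fun l => gt (Sum.inr (Fin.castLE (Nat.sub_le n 1) i0)) (Sum.inr l)
        * x (Sum.inr l) j)]
      simp only [hg6, zero_mul, Finset.sum_const_zero, zero_add]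
      rw [hg8, zero_mul, add_zero]
      exact Finset.sum_congr rfl fun j0 _ => by rw [hg7]
    have hrowB : ∀ j : Fin n,
        (gt * x) (Sum.inr ⟨n-1, by omega⟩) j
          = c * x (Sum.inl ⟨n-1, by omega⟩) j
            + ((∑ j0 : Fin (n-1), muv j0 * x (Sum.inr (Fin.castLE (Nat.sub_le n 1) j0)) j)
              + d * x (Sum.inr ⟨n-1, by omega⟩) j) := by
      intro j
      rw [Matrix.mul_apply, Fintype.sum_sum_type]
      rw [sum_split hn1 (f := fun l => gt (Sum.inr ⟨n-1, by omega⟩) (Sum.inl l) * x (Sum.inl l) j)]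
      rw [sum_split hn1 (f := fun l => gt (Sum.inr ⟨n-1, by omega⟩) (Sum.inr l) * x (Sum.inr l) j)]
      simp only [hg9, hg10, hg11, hg12, zero_mul, Finset.sum_const_zero, zero_add]
    have hrowC : ∀ j : Fin n,
        (gt * x) (Sum.inl ⟨n-1, by omega⟩) j
          = a * x (Sum.inl ⟨n-1, by omega⟩) j
            + ((∑ j0 : Fin (n-1), lamv j0 * x (Sum.inr (Fin.castLE (Nat.sub_le n 1) j0)) j)
              + b * x (Sum.inr ⟨n-1, by omega⟩) j) := by
      intro j
      rw [Matrix.mul_apply, Fintype.sum_sum_type]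
      rw [sum_split hn1 (f := fun l => gt (Sum.inl ⟨n-1, by omega⟩) (Sum.inl l) * x (Sum.inl l) j)]
      rw [sum_split hn1 (f := fun l => gt (Sum.inl ⟨n-1, by omega⟩) (Sum.inr l) * x (Sum.inr l) j)]
      simp only [hg2, hg3, hg4, hg5, zero_mul, Finset.sum_const_zero, zero_add]
    -- the key factorization
    have key : Mxv (gt * x) w = Q * Mxv x vv := by
      ext i j
      rw [Matrix.mul_apply, sum_split hn1 (f := fun j' => Q i j' * Mxv x vv j' j)]
      by_cases hi : (i : ℕ) = n - 1
      · rw [show i = (⟨n-1, by omega⟩ : Fin n) from Fin.ext hi]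
        rw [Mxv_last _ _ _ rfl, hrowB, hrowC]
        rw [Mxv_last x vv _ rfl]
        have hsum : ∑ j0 : Fin (n-1),
            Q (⟨n-1, by omega⟩ : Fin n) (Fin.castLE (Nat.sub_le n 1) j0)
              * Mxv x vv (Fin.castLE (Nat.sub_le n 1) j0) j
            = w 0 * (∑ j0 : Fin (n-1), muv j0 * x (Sum.inr (Fin.castLE (Nat.sub_le n 1) j0)) j)
              - w 1 * (∑ j0 : Fin (n-1), lamv j0 * x (Sum.inr (Fin.castLE (Nat.sub_le n 1) j0)) j) := by
          rw [Finset.mul_sum, Finset.mul_sum, ← Finset.sum_sub_distrib]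
          refine Finset.sum_congr rfl fun j0 _ => ?_
          rw [hQ, Qmat_bl (hn := hn1), Mxv_ne x vv _ (by have := j0.isLt; simp only [Fin.coe_castLE]; omega)]
          rw [hw0, hw1]
          ring
        rw [hsum, hQ, Qmat_br (hn := hn1), hw0, hw1]
        ring
      · have hilt : (i : ℕ) < n - 1 := by have := i.isLt; omega
        rw [show i = Fin.castLE (Nat.sub_le n 1) ⟨(i : ℕ), hilt⟩ from Fin.ext rfl]
        rw [Mxv_ne _ _ _ (by simpa using hi), hrowA]
        rw [hQ, Qmat_tr (hn := hn1), zero_mul, add_zero]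
        refine Finset.sum_congr rfl fun j0 _ => ?_
        rw [Qmat_tl, Mxv_ne x vv _ (by have := j0.isLt; simp only [Fin.coe_castLE]; omega)]
    -- determinant of Q
    have hQcol : ∀ i : Fin n, (i : ℕ) ≠ n - 1 → Q i ⟨n-1, by omega⟩ = 0 := by
      intro i hi; rw [hQ]; exact Qmat_col conj p lamv muv a b c d vv r hn1 i hi
    have hQsub : Q.submatrix (Fin.castLE (Nat.sub_le n 1)) (Fin.castLE (Nat.sub_le n 1))
        = (ctr conj p)⁻¹ := by
      ext i0 j0
      rw [Matrix.submatrix_apply, hQ, Qmat_tl]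
    have hQdet : Q.det = (conj p.det)⁻¹ * (r⁻¹ * (a * d - b * c)) := by
      rw [det_lastcol hn1 Q hQcol, hQsub, hQ, Qmat_br (hn := hn1), Matrix.det_nonsing_inv,
        Ring.inverse_eq_inv', det_ctr]
    -- norm of det h is 1
    have hNdet : (a * d - b * c) * conj (a * d - b * c) = 1 := by
      have h := congrArg Matrix.det hh
      rw [Matrix.det_mul, Matrix.det_mul, det_ctr] at h
      have hH1 : (H1 k').det = -1 := by
        simp [H1, Matrix.det_fin_two_of]
      have hDh : (!![a, b; c, d] : Matrix (Fin 2) (Fin 2) k').det = a * d - b * c := by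
        simp [Matrix.det_fin_two_of]
      rw [hH1, hDh] at h
      linear_combination -h
    -- putting it together
    have hDet1 : gxv conj T (gt * x) w = Q.det * gxv conj T x vv * conj Q.det := by
      unfold gxv
      rw [key, ctr_mul]
      have hassoc : (Q * Mxv x vv) * T⁻¹ * (ctr conj (Mxv x vv) * ctr conj Q)
          = Q * (Mxv x vv * T⁻¹ * ctr conj (Mxv x vv)) * ctr conj Q := by
        simp only [Matrix.mul_assoc]
      rw [hassoc, Matrix.det_mul, Matrix.det_mul, det_ctr]
    have hconjQ : conj ((conj p.det)⁻¹ * (r⁻¹ * (a * d - b * c)))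
        = (p.det)⁻¹ * ((conj r)⁻¹ * conj (a * d - b * c)) := by
      rw [_root_.map_mul, _root_.map_mul, map_inv₀, map_inv₀, hinvol]
    rw [hDet1, hQdet, hconjQ]
    linear_combination
      ((conj p.det)⁻¹ * (p.det)⁻¹ * r⁻¹ * (conj r)⁻¹ * gxv conj T x vv) * hNdet
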